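/- Let a, b be odd natural numbers with gcd(a,b) = 1, let e_p = e^{πi/p} viewed as a unit quaternion e^{πi/p} = cos(π/p) + sin(π/p)·i, and let H_{a,b} ≤ SO(4) be the subgroup generated by the rotations [e_a,1], [1,e_b], [1,j], [j,1] (where [l,r] denotes x ↦ l x r̄). Then H_{a,b} is a finite group of order 8ab. -/

import Mathlib

open Quaternion Real

noncomputable section
open scoped Classical

/-- The linear map `x ↦ l · x · r̄` on `ℍ ≅ ℝ⁴`. -/
def qRot (l r : ℍ[ℝ]) : ℍ[ℝ] →ₗ[ℝ] ℍ[ℝ] where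
  toFun x := l * x * star r
  map_add' x y := by simp [mul_add, add_mul]
  map_smul' c x := by simp [mul_smul_comm, smul_mul_assoc]

/-- The rotation `[l,r] : x ↦ l · x · r̄` as an invertible linear map of `ℝ⁴ ≅ ℍ`
(for `l, r ≠ 0`; junk value `1` otherwise). -/
def qRotUnit (l r : ℍ[ℝ]) : (ℍ[ℝ] →ₗ[ℝ] ℍ[ℝ])ˣ :=
  if h : l ≠ 0 ∧ r ≠ 0 then
    { val := qRot l r
      inv := qRot l⁻¹ r⁻¹
      val_inv := by
        apply LinearMap.ext; intro x
        show l * (l⁻¹ * x * star r⁻¹) * star r = x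
        have h1 : star (r⁻¹ : ℍ[ℝ]) * star r = 1 := by
          rw [← star_mul, mul_inv_cancel₀ h.2, star_one]
        have h2 : l * l⁻¹ = 1 := mul_inv_cancel₀ h.1
        calc l * (l⁻¹ * x * star r⁻¹) * star r
            = (l * l⁻¹) * x * (star r⁻¹ * star r) := by noncomm_ring
          _ = x := by rw [h1, h2, one_mul, mul_one]
      inv_val := by
        apply LinearMap.ext; intro x
        show l⁻¹ * (l * x * star r) * star r⁻¹ = x
        have h1 : star r * star (r⁻¹ : ℍ[ℝ]) = 1 := by
          rw [← star_mul, inv_mul_cancel₀ h.2, star_one]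
        have h2 : l⁻¹ * l = 1 := inv_mul_cancel₀ h.1
        calc l⁻¹ * (l * x * star r) * star r⁻¹
            = (l⁻¹ * l) * x * (star r * star r⁻¹) := by noncomm_ring
          _ = x := by rw [h1, h2, one_mul, mul_one] }
  else 1

/-- The unit quaternion `e_p = cos(π/p) + sin(π/p)·i`. -/
def eQ (p : ℕ) : ℍ[ℝ] := ⟨Real.cos (π / p), Real.sin (π / p), 0, 0⟩

/-- The quaternion unit `j`. -/
def jQ : ℍ[ℝ] := ⟨0, 0, 1, 0⟩

/-- The group `H_{a,b} = ⟨[e_a,1], [1,e_b], [1,j], [j,1]⟩`. -/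
def Hgrp (a b : ℕ) : Subgroup (ℍ[ℝ] →ₗ[ℝ] ℍ[ℝ])ˣ :=
  Subgroup.closure {qRotUnit (eQ a) 1, qRotUnit 1 (eQ b), qRotUnit 1 jQ, qRotUnit jQ 1}

/-! ### Auxiliary material -/

/-- The complex number `e^{iπ/p}`. -/
def eC (p : ℕ) : ℂ := Complex.exp ((π / p : ℝ) * Complex.I)

lemma eQ_eq (p : ℕ) : eQ p = Quaternion.coeComplex (eC p) := by
  simp only [eQ, eC, Quaternion.coeComplex, Complex.exp_ofReal_mul_I_re,
    Complex.exp_ofReal_mul_I_im]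
  rfl

lemma jQ_mul_jQ : jQ * jQ = -1 := by
  ext <;> simp only [Quaternion.re_mul, Quaternion.imI_mul, Quaternion.imJ_mul, Quaternion.imK_mul] <;> simp [jQ]

lemma normSq_eQ (p : ℕ) : normSq (eQ p) = 1 := by
  rw [Quaternion.normSq_def']; simp only [eQ]
  have := Real.sin_sq_add_cos_sq (π / p)
  ring_nf
  ring_nf at this
  linarith

lemma eC_pow_two_mul (n : ℕ) (hn : n ≠ 0) : eC n ^ (2 * n) = 1 := by
  rw [eC, ← Complex.exp_nat_mul]
  have : ((2 * n : ℕ) : ℂ) * (((π / n : ℝ) : ℂ) * Complex.I) = 2 * π * Complex.I := by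
    have hn' : (n : ℂ) ≠ 0 := Nat.cast_ne_zero.mpr hn
    push_cast
    field_simp
  rw [this, Complex.exp_two_pi_mul_I]

lemma eC_pow_n (n : ℕ) (hn : n ≠ 0) : eC n ^ n = -1 := by
  rw [eC, ← Complex.exp_nat_mul]
  have : ((n : ℕ) : ℂ) * (((π / n : ℝ) : ℂ) * Complex.I) = π * Complex.I := by
    have hn' : (n : ℂ) ≠ 0 := Nat.cast_ne_zero.mpr hn
    push_cast
    field_simp
  rw [this, Complex.exp_pi_mul_I]

lemma eC_pow_eq_one (n : ℕ) (hn : n ≠ 0) (v : ℕ) (hv : v < 2 * n) (h : eC n ^ v = 1) : v = 0 := by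
  rw [eC, ← Complex.exp_nat_mul, Complex.exp_eq_one_iff] at h
  obtain ⟨m, hm⟩ := h
  have h2 := congrArg Complex.im hm
  simp [Complex.mul_im, Complex.I_im, Complex.I_re] at h2
  have hn' : (n : ℝ) ≠ 0 := Nat.cast_ne_zero.mpr hn
  have hπ := Real.pi_ne_zero
  have hvR : (v : ℝ) = ((m * (2 * n) : ℤ) : ℝ) := by
    have hstep : (v : ℝ) * π = ((m * (2 * n) : ℤ) : ℝ) * π := by
      field_simp at h2
      push_cast
      rw [h2]; ring
    exact mul_right_cancel₀ hπ hstep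
  have hvZ : (v : ℤ) = m * (2 * n) := by exact_mod_cast hvR
  have hdvd : (2 * n : ℕ) ∣ v := by
    have : ((2 * n : ℕ) : ℤ) ∣ (v : ℤ) := ⟨m, by rw [hvZ]; push_cast; ring⟩
    exact_mod_cast this
  exact Nat.eq_zero_of_dvd_of_lt hdvd hv

/-- The unit quaternion `e_p` as a unit. -/
def eU (p : ℕ) : ℍ[ℝ]ˣ where
  val := eQ p
  inv := star (eQ p)
  val_inv := by
    have := Quaternion.self_mul_star (eQ p)
    rw [this, normSq_eQ]; norm_num
  inv_val := by
    have := Quaternion.star_mul_self (eQ p)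
    rw [this, normSq_eQ]; norm_num

/-- The quaternion `j` as a unit. -/
def jU : ℍ[ℝ]ˣ where
  val := jQ
  inv := -jQ
  val_inv := by rw [mul_neg, jQ_mul_jQ]; norm_num
  inv_val := by rw [neg_mul, jQ_mul_jQ]; norm_num

lemma coeComplex_injective : Function.Injective (Quaternion.coeComplex) := fun z w h =>
  Complex.ext (congrArg QuaternionAlgebra.re h) (congrArg QuaternionAlgebra.imI h)

/-- The subgroup of unit quaternions generated by `e_n` and `j`. -/
def Agrp (n : ℕ) : Subgroup ℍ[ℝ]ˣ := Subgroup.closure {eU n, jU}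

lemma eU_mem (n : ℕ) : eU n ∈ Agrp n := Subgroup.subset_closure (Set.mem_insert _ _)
lemma jU_mem (n : ℕ) : jU ∈ Agrp n := Subgroup.subset_closure (Set.mem_insert_of_mem _ rfl)

lemma eU_pow_val (n : ℕ) (k : ℕ) :
    ((eU n ^ k : ℍ[ℝ]ˣ) : ℍ[ℝ]) = Quaternion.coeComplex (eC n ^ k) := by
  rw [Units.val_pow_eq_pow_val]
  have : ((eU n : ℍ[ℝ]ˣ) : ℍ[ℝ]) = Quaternion.coeComplex (eC n) := eQ_eq n
  rw [this]
  exact (map_pow Quaternion.ofComplex (eC n) k).symm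

lemma eU_zpow_val (n : ℕ) (k : ℤ) :
    ((eU n ^ k : ℍ[ℝ]ˣ) : ℍ[ℝ]) = Quaternion.coeComplex (eC n ^ k) := by
  obtain ⟨m, rfl | rfl⟩ := Int.eq_nat_or_neg k
  · rw [zpow_natCast, zpow_natCast]; exact eU_pow_val n m
  · rw [zpow_neg, zpow_neg, zpow_natCast, zpow_natCast]
    have h2 : Quaternion.coeComplex ((eC n ^ m)⁻¹) = (Quaternion.coeComplex (eC n ^ m))⁻¹ :=
      map_inv₀ Quaternion.ofComplex.toRingHom _
    rw [h2, ← eU_pow_val n m]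
    exact Units.val_inv_eq_inv_val _

lemma eU_zpow_two_mul (n : ℕ) (hn : n ≠ 0) : eU n ^ ((2 * n : ℕ) : ℤ) = 1 := by
  apply Units.ext
  rw [eU_zpow_val n, zpow_natCast, eC_pow_two_mul n hn]
  rfl

lemma eU_zpow_congr (n : ℕ) (hn : n ≠ 0) {x y : ℤ} (h : ((2 * n : ℕ) : ℤ) ∣ x - y) :
    eU n ^ x = eU n ^ y := by
  obtain ⟨t, ht⟩ := h
  have hx : x = y + ((2 * n : ℕ) : ℤ) * t := by linarith
  rw [hx, zpow_add, zpow_mul, eU_zpow_two_mul n hn, one_zpow, mul_one]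

lemma jU_conj (n : ℕ) : jU⁻¹ * eU n * jU = (eU n)⁻¹ := by
  apply Units.ext
  have h1 : ((jU⁻¹ : ℍ[ℝ]ˣ) : ℍ[ℝ]) = -jQ := rfl
  have h2 : (((eU n)⁻¹ : ℍ[ℝ]ˣ) : ℍ[ℝ]) = star (eQ n) := rfl
  rw [Units.val_mul, Units.val_mul, h1, h2]
  show -jQ * eQ n * jQ = star (eQ n)
  ext <;> simp [Quaternion.re_mul, Quaternion.imI_mul, Quaternion.imJ_mul,
    Quaternion.imK_mul] <;> simp [jQ, eQ]

lemma jU_conj_zpow (n : ℕ) (m : ℤ) : jU⁻¹ * eU n ^ m * jU = eU n ^ (-m) := by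
  have h := map_zpow (MulAut.conj jU⁻¹) (eU n) m
  have hbase : (MulAut.conj jU⁻¹) (eU n) = (eU n)⁻¹ := by
    simpa [MulAut.conj_apply] using jU_conj n
  rw [hbase] at h
  simpa [MulAut.conj_apply, zpow_neg, mul_assoc] using h

/-- `E i = e^i` for `i : ZMod (2n)`. -/
def Efun (n : ℕ) : ZMod (2 * n) → ℍ[ℝ]ˣ := fun i => eU n ^ (i.val : ℤ)

lemma Efun_intCast (n : ℕ) (hn : n ≠ 0) (m : ℤ) :
    Efun n ((m : ℤ) : ZMod (2 * n)) = eU n ^ m := by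
  haveI : NeZero (2 * n) := ⟨by omega⟩
  apply eU_zpow_congr n hn
  have : ((((m : ZMod (2 * n)).val : ℕ) : ℤ) : ZMod (2 * n)) = ((m : ℤ) : ZMod (2 * n)) := by
    push_cast
    exact ZMod.natCast_rightInverse _
  rwa [← sub_eq_zero, ← Int.cast_sub, ZMod.intCast_zmod_eq_zero_iff_dvd] at this

lemma Efun_surj_rep (n : ℕ) (hn : n ≠ 0) (i : ZMod (2 * n)) :
    ∃ m : ℤ, i = ((m : ℤ) : ZMod (2 * n)) := by
  haveI : NeZero (2 * n) := ⟨by omega⟩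
  exact ⟨(i.val : ℤ), by push_cast; exact (ZMod.natCast_rightInverse _).symm⟩

lemma Efun_add (n : ℕ) (hn : n ≠ 0) (i j : ZMod (2 * n)) :
    Efun n (i + j) = Efun n i * Efun n j := by
  obtain ⟨mi, rfl⟩ := Efun_surj_rep n hn i
  obtain ⟨mj, rfl⟩ := Efun_surj_rep n hn j
  rw [← Int.cast_add, Efun_intCast n hn, Efun_intCast n hn, Efun_intCast n hn, zpow_add]

lemma Efun_mul_jU (n : ℕ) (hn : n ≠ 0) (i : ZMod (2 * n)) :
    Efun n i * jU = jU * Efun n (-i) := by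
  obtain ⟨m, rfl⟩ := Efun_surj_rep n hn i
  rw [← Int.cast_neg, Efun_intCast n hn, Efun_intCast n hn]
  have h := jU_conj_zpow n m
  calc eU n ^ m * jU = jU * (jU⁻¹ * eU n ^ m * jU) := by group
    _ = jU * eU n ^ (-m) := by rw [h]

lemma jU_mul_jU (n : ℕ) (hn : n ≠ 0) : jU * jU = Efun n ((n : ℕ) : ZMod (2 * n)) := by
  have hc : (((n : ℕ) : ℤ) : ZMod (2 * n)) = ((n : ℕ) : ZMod (2 * n)) := by push_cast; rfl
  rw [← hc, Efun_intCast n hn]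
  apply Units.ext
  rw [Units.val_mul]
  show jQ * jQ = _
  rw [jQ_mul_jQ, eU_zpow_val n, zpow_natCast, eC_pow_n n hn]
  ext <;> simp [Quaternion.coeComplex]

/-- The homomorphism from the abstract dicyclic group onto `Agrp n`. -/
def chi (n : ℕ) (hn : n ≠ 0) : QuaternionGroup n →* ℍ[ℝ]ˣ where
  toFun g := match g with
    | .a i => Efun n i
    | .xa i => jU * Efun n i
  map_one' := by
    show Efun n 0 = 1
    have : ((0 : ℤ) : ZMod (2 * n)) = 0 := by push_cast; rfl
    rw [← this, Efun_intCast n hn, zpow_zero]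
  map_mul' := by
    rintro (i | i) (j | j)
    · show Efun n (i + j) = Efun n i * Efun n j
      exact Efun_add n hn i j
    · show jU * Efun n (j - i) = Efun n i * (jU * Efun n j)
      rw [← mul_assoc, Efun_mul_jU n hn, mul_assoc, ← Efun_add n hn]
      ring_nf
    · show jU * Efun n (i + j) = jU * Efun n i * Efun n j
      rw [mul_assoc, ← Efun_add n hn]
    · show Efun n ((n : ZMod (2*n)) + j - i) = jU * Efun n i * (jU * Efun n j)
      rw [mul_assoc, ← mul_assoc (Efun n i), Efun_mul_jU n hn, ← mul_assoc, ← mul_assoc,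
        jU_mul_jU n hn, mul_assoc, ← Efun_add n hn, ← Efun_add n hn]
      ring_nf

lemma chi_injective (n : ℕ) (hn : n ≠ 0) : Function.Injective (chi n hn) := by
  haveI : NeZero (2 * n) := ⟨by omega⟩
  apply (injective_iff_map_eq_one _).mpr
  rintro (i | i) h
  · have h' : Efun n i = 1 := h
    have hval : Quaternion.coeComplex (eC n ^ (i.val : ℤ)) = Quaternion.coeComplex 1 := by
      rw [← eU_zpow_val n]
      exact congrArg Units.val h'
    have hC : eC n ^ (i.val : ℕ) = 1 := by
      have := coeComplex_injective hval
      rwa [zpow_natCast] at this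
    have hv0 : i.val = 0 := eC_pow_eq_one n hn i.val (ZMod.val_lt i) hC
    have hi : i = 0 := by
      have := ZMod.val_cast_of_lt (show 0 < 2 * n by omega)
      have h2 : ((i.val : ℕ) : ZMod (2 * n)) = i := ZMod.natCast_rightInverse i
      rw [hv0] at h2
      simpa using h2.symm
    rw [hi]
    rfl
  · exfalso
    have h' : jU * Efun n i = 1 := h
    have hval : jQ * Quaternion.coeComplex (eC n ^ (i.val : ℤ)) = 1 := by
      have hu := congrArg Units.val h'
      have h2 : ((Efun n i : ℍ[ℝ]ˣ) : ℍ[ℝ]) = Quaternion.coeComplex (eC n ^ (i.val : ℤ)) :=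
        eU_zpow_val n _
      rwa [Units.val_mul, h2, Units.val_one] at hu
    have := congrArg QuaternionAlgebra.re hval
    simp [Quaternion.re_mul] at this; simp [jQ, Quaternion.coeComplex] at this

lemma Efun_zero (n : ℕ) (hn : n ≠ 0) : Efun n 0 = 1 := by
  haveI : NeZero (2 * n) := ⟨by omega⟩
  show eU n ^ (((0 : ZMod (2*n)).val : ℕ) : ℤ) = 1
  rw [ZMod.val_zero]
  norm_num

lemma chi_range (n : ℕ) (hn : n ≠ 0) : (chi n hn).range = Agrp n := by
  haveI : NeZero (2 * n) := ⟨by omega⟩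
  apply le_antisymm
  · rintro x ⟨(i | i), rfl⟩
    · exact zpow_mem (eU_mem n) _
    · exact mul_mem (jU_mem n) (zpow_mem (eU_mem n) _)
  · apply Subgroup.closure_le _ |>.mpr
    rintro x (rfl | rfl)
    · refine ⟨.a 1, ?_⟩
      show eU n ^ (((1 : ZMod (2*n)).val : ℕ) : ℤ) = eU n
      haveI : Fact (1 < 2 * n) := ⟨by omega⟩
      rw [ZMod.val_one]
      norm_num
    · refine ⟨.xa 0, ?_⟩
      show jU * Efun n 0 = jU
      rw [Efun_zero n hn, mul_one]

lemma Agrp_card (n : ℕ) (hn : n ≠ 0) : Nat.card (Agrp n) = 4 * n := by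
  haveI : NeZero n := ⟨hn⟩
  rw [← chi_range n hn]
  have h1 : Nat.card (chi n hn).range = Nat.card (QuaternionGroup n) :=
    Nat.card_congr (Equiv.ofInjective _ (chi_injective n hn)).symm
  rw [h1, Nat.card_eq_fintype_card, QuaternionGroup.card]

lemma eU_pow_n (n : ℕ) (hn : n ≠ 0) : eU n ^ n = -1 := by
  apply Units.ext
  rw [eU_pow_val n, eC_pow_n n hn]
  show Quaternion.coeComplex (-1) = ((-1 : ℍ[ℝ]ˣ) : ℍ[ℝ])
  rw [Units.val_neg, Units.val_one]
  ext <;> simp [Quaternion.coeComplex]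

lemma neg_one_mem_Agrp (n : ℕ) (hn : n ≠ 0) : (-1 : ℍ[ℝ]ˣ) ∈ Agrp n :=
  eU_pow_n n hn ▸ pow_mem (eU_mem n) n

lemma normSq_of_mem_Agrp (n : ℕ) {u : ℍ[ℝ]ˣ} (hu : u ∈ Agrp n) : normSq (u : ℍ[ℝ]) = 1 := by
  let N : ℍ[ℝ]ˣ →* ℝˣ := Units.map (Quaternion.normSq (R := ℝ)).toMonoidHom
  have hle : Agrp n ≤ N.ker := by
    apply Subgroup.closure_le _ |>.mpr
    rintro x (rfl | rfl)
    · rw [SetLike.mem_coe, MonoidHom.mem_ker]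
      apply Units.ext
      show normSq (eQ n) = 1
      exact normSq_eQ n
    · rw [SetLike.mem_coe, MonoidHom.mem_ker]
      apply Units.ext
      show normSq jQ = 1
      rw [Quaternion.normSq_def']; simp [jQ]
  have := hle hu
  rw [MonoidHom.mem_ker] at this
  have := congrArg Units.val this
  exact this

lemma qRotUnit_mul (l1 r1 l2 r2 : ℍ[ℝ]) (h1 : l1 ≠ 0) (h2 : r1 ≠ 0) (h3 : l2 ≠ 0)
    (h4 : r2 ≠ 0) :
    qRotUnit (l1 * l2) (r1 * r2) = qRotUnit l1 r1 * qRotUnit l2 r2 := by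
  rw [qRotUnit, qRotUnit, qRotUnit, dif_pos ⟨mul_ne_zero h1 h3, mul_ne_zero h2 h4⟩,
    dif_pos ⟨h1, h2⟩, dif_pos ⟨h3, h4⟩]
  apply Units.ext
  apply LinearMap.ext
  intro x
  show (l1 * l2) * x * star (r1 * r2) = l1 * (l2 * x * star r2) * star r1
  rw [star_mul]
  noncomm_ring

lemma qRotUnit_one : qRotUnit (1 : ℍ[ℝ]) 1 = 1 := by
  rw [qRotUnit, dif_pos ⟨one_ne_zero, one_ne_zero⟩]
  apply Units.ext
  apply LinearMap.ext
  intro x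
  show (1 : ℍ[ℝ]) * x * star (1 : ℍ[ℝ]) = x
  simp

/-- The rotation homomorphism `(l, r) ↦ [l, r]`. -/
def Phi : ℍ[ℝ]ˣ × ℍ[ℝ]ˣ →* (ℍ[ℝ] →ₗ[ℝ] ℍ[ℝ])ˣ where
  toFun p := qRotUnit (p.1 : ℍ[ℝ]) (p.2 : ℍ[ℝ])
  map_one' := qRotUnit_one
  map_mul' p q := by
    show qRotUnit _ _ = _
    simp only [Prod.fst_mul, Prod.snd_mul, Units.val_mul]
    exact qRotUnit_mul _ _ _ _ (Units.ne_zero _) (Units.ne_zero _) (Units.ne_zero _)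
      (Units.ne_zero _)

lemma Phi_neg_one : Phi (-1, -1) = 1 := by
  show qRotUnit ((-1 : ℍ[ℝ]ˣ) : ℍ[ℝ]) ((-1 : ℍ[ℝ]ˣ) : ℍ[ℝ]) = 1
  have hval : ((-1 : ℍ[ℝ]ˣ) : ℍ[ℝ]) = -1 := by rw [Units.val_neg, Units.val_one]
  rw [hval, qRotUnit, dif_pos ⟨by norm_num, by norm_num⟩]
  apply Units.ext
  apply LinearMap.ext
  intro x
  show (-1 : ℍ[ℝ]) * x * star (-1 : ℍ[ℝ]) = x
  simp

def iQ : ℍ[ℝ] := ⟨0,1,0,0⟩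

lemma real_of_commutes (q : ℍ[ℝ]) (h1 : q * iQ = iQ * q)
    (h2 : q * jQ = jQ * q) : q = ((q.re : ℝ) : ℍ[ℝ]) := by
  rw [Quaternion.ext_iff] at h1 h2
  obtain ⟨a1, a2, a3, a4⟩ := h1
  obtain ⟨b1, b2, b3, b4⟩ := h2
  simp only [Quaternion.re_mul, Quaternion.imI_mul, Quaternion.imJ_mul,
    Quaternion.imK_mul] at a1 a2 a3 a4 b1 b2 b3 b4; simp only [jQ, iQ] at a1 a2 a3 a4 b1 b2 b3 b4
  ext <;>
    simp only [Quaternion.re_coe, Quaternion.imI_coe, Quaternion.imJ_coe, Quaternion.imK_coe] <;>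
    linarith

/-- The group `H_{a,b} = ⟨[e_a,1], [1,e_b], [1,j], [j,1]⟩`. -/
theorem Hgrp_card (a b : ℕ) (ha : Odd a) (hb : Odd b) (hab : Nat.Coprime a b) :
    Nat.card (Hgrp a b) = 8 * a * b := by
  have ha0 : a ≠ 0 := by rintro rfl; simp [Nat.odd_iff] at ha
  have hb0 : b ≠ 0 := by rintro rfl; simp [Nat.odd_iff] at hb
  set G : Subgroup (ℍ[ℝ]ˣ × ℍ[ℝ]ˣ) := (Agrp a).prod (Agrp b) with hGdef
  -- Step 1: `Hgrp a b` is the image of `G` under `Phi`.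
  have hGgen : G = Subgroup.closure {((eU a : ℍ[ℝ]ˣ), (1 : ℍ[ℝ]ˣ)), (1, eU b), (1, jU), (jU, 1)} := by
    apply le_antisymm
    · rw [hGdef, Subgroup.prod_le_iff]
      constructor
      · rw [Agrp, MonoidHom.map_closure]
        apply Subgroup.closure_mono
        rw [Set.image_insert_eq, Set.image_singleton]
        intro x hx
        simp only [MonoidHom.inl_apply, Set.mem_insert_iff, Set.mem_singleton_iff] at hx
        rcases hx with rfl | rfl
        · exact Set.mem_insert _ _
        · simp
      · rw [Agrp, MonoidHom.map_closure]
        apply Subgroup.closure_mono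
        rw [Set.image_insert_eq, Set.image_singleton]
        intro x hx
        simp only [MonoidHom.inr_apply, Set.mem_insert_iff, Set.mem_singleton_iff] at hx
        rcases hx with rfl | rfl
        · simp
        · simp
    · apply Subgroup.closure_le _ |>.mpr
      intro x hx
      simp only [Set.mem_insert_iff, Set.mem_singleton_iff] at hx
      rcases hx with rfl | rfl | rfl | rfl
      · exact Subgroup.mem_prod.mpr ⟨eU_mem a, one_mem _⟩
      · exact Subgroup.mem_prod.mpr ⟨one_mem _, eU_mem b⟩
      · exact Subgroup.mem_prod.mpr ⟨one_mem _, jU_mem b⟩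
      · exact Subgroup.mem_prod.mpr ⟨jU_mem a, one_mem _⟩
  have hmap : Subgroup.map Phi G = Hgrp a b := by
    rw [hGgen, MonoidHom.map_closure, Hgrp]
    congr 1
    rw [Set.image_insert_eq, Set.image_insert_eq, Set.image_insert_eq, Set.image_singleton]
    rfl
  -- Step 2: set up the restricted homomorphism and its kernel.
  set ψ : ↥G →* (ℍ[ℝ] →ₗ[ℝ] ℍ[ℝ])ˣ := Phi.comp G.subtype with hψdef
  have hrange : ψ.range = Subgroup.map Phi G := by
    rw [hψdef, MonoidHom.range_comp, Subgroup.range_subtype]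
  have hzmem : ((-1 : ℍ[ℝ]ˣ), (-1 : ℍ[ℝ]ˣ)) ∈ G :=
    Subgroup.mem_prod.mpr ⟨neg_one_mem_Agrp a ha0, neg_one_mem_Agrp b hb0⟩
  set z : ↥G := ⟨(-1, -1), hzmem⟩ with hzdef
  have hker : ψ.ker = Subgroup.zpowers z := by
    apply le_antisymm
    · intro g hg
      rw [MonoidHom.mem_ker] at hg
      have hΦ : qRotUnit (((g : ℍ[ℝ]ˣ × ℍ[ℝ]ˣ).1 : ℍ[ℝ])) (((g : ℍ[ℝ]ˣ × ℍ[ℝ]ˣ).2 : ℍ[ℝ])) = 1 := hg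
      set l : ℍ[ℝ]ˣ := (g : ℍ[ℝ]ˣ × ℍ[ℝ]ˣ).1 with hldef
      set r : ℍ[ℝ]ˣ := (g : ℍ[ℝ]ˣ × ℍ[ℝ]ˣ).2 with hrdef
      rw [qRotUnit, dif_pos ⟨Units.ne_zero l, Units.ne_zero r⟩] at hΦ
      have hmapeq : qRot (l : ℍ[ℝ]) (r : ℍ[ℝ]) = 1 := congrArg Units.val hΦ
      have hx : ∀ x : ℍ[ℝ], (l : ℍ[ℝ]) * x * star (r : ℍ[ℝ]) = x := fun x =>
        LinearMap.ext_iff.mp hmapeq x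
      have h1 : (l : ℍ[ℝ]) * star (r : ℍ[ℝ]) = 1 := by have := hx 1; rwa [mul_one] at this
      have hsr : star (r : ℍ[ℝ]) = (l : ℍ[ℝ])⁻¹ := eq_inv_of_mul_eq_one_right h1
      have hcomm : ∀ x, (l : ℍ[ℝ]) * x = x * (l : ℍ[ℝ]) := by
        intro x
        have h2 := hx x
        rw [hsr] at h2
        calc (l : ℍ[ℝ]) * x = (l : ℍ[ℝ]) * x * ((l : ℍ[ℝ])⁻¹ * (l : ℍ[ℝ])) := by
              rw [inv_mul_cancel₀ (Units.ne_zero l), mul_one]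
          _ = x * (l : ℍ[ℝ]) := by rw [← mul_assoc, h2]
      have hreal : (l : ℍ[ℝ]) = (((l : ℍ[ℝ]).re : ℝ) : ℍ[ℝ]) :=
        real_of_commutes _ (hcomm iQ) (hcomm jQ)
      have hmem := g.2
      rw [Subgroup.mem_prod] at hmem
      have hnorm : normSq (l : ℍ[ℝ]) = 1 := normSq_of_mem_Agrp a hmem.1
      have hresq : (l : ℍ[ℝ]).re * (l : ℍ[ℝ]).re = 1 := by
        rw [hreal] at hnorm
        simpa [Quaternion.normSq_def', sq] using hnorm
      rcases mul_self_eq_one_iff.mp hresq with hre | hre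
      · have hl1 : (l : ℍ[ℝ]) = 1 := by rw [hreal, hre]; norm_num
        have hr1 : (r : ℍ[ℝ]) = 1 := by
          have : star (r : ℍ[ℝ]) = 1 := by rw [hsr, hl1]; norm_num
          calc (r : ℍ[ℝ]) = star (star (r : ℍ[ℝ])) := (star_star _).symm
            _ = 1 := by rw [this, star_one]
        have : g = 1 := by
          apply Subtype.ext
          apply Prod.ext
          · exact Units.ext hl1
          · exact Units.ext hr1
        rw [this]
        exact one_mem _
      · have hl1 : (l : ℍ[ℝ]) = -1 := by rw [hreal, hre]; norm_num
        have hr1 : (r : ℍ[ℝ]) = -1 := by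
          have hstar : star (r : ℍ[ℝ]) = -1 := by
            rw [hsr, hl1]
            exact inv_neg_one
          calc (r : ℍ[ℝ]) = star (star (r : ℍ[ℝ])) := (star_star _).symm
            _ = -1 := by rw [hstar]; simp
        have : g = z := by
          apply Subtype.ext
          apply Prod.ext
          · apply Units.ext
            rw [hl1]
            exact (by rw [Units.val_neg, Units.val_one] : ((-1 : ℍ[ℝ]ˣ) : ℍ[ℝ]) = -1).symm
          · apply Units.ext
            rw [hr1]
            exact (by rw [Units.val_neg, Units.val_one] : ((-1 : ℍ[ℝ]ˣ) : ℍ[ℝ]) = -1).symm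
        rw [this]
        exact Subgroup.mem_zpowers z
    · rw [Subgroup.zpowers_le, MonoidHom.mem_ker]
      show Phi (-1, -1) = 1
      exact Phi_neg_one
  -- Step 3: count.
  have hcardG : Nat.card ↥G = 4 * a * (4 * b) := by
    rw [hGdef, Nat.card_congr (Subgroup.prodEquiv (Agrp a) (Agrp b)).toEquiv, Nat.card_prod,
      Agrp_card a ha0, Agrp_card b hb0]
  have hkercard : Nat.card ψ.ker = 2 := by
    rw [hker, Nat.card_zpowers]
    refine orderOf_eq_prime ?_ ?_
    · apply Subtype.ext
      show ((-1, -1) : ℍ[ℝ]ˣ × ℍ[ℝ]ˣ) ^ 2 = 1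
      have : ((-1, -1) : ℍ[ℝ]ˣ × ℍ[ℝ]ˣ) ^ 2 = ((-1 : ℍ[ℝ]ˣ) ^ 2, (-1 : ℍ[ℝ]ˣ) ^ 2) := rfl
      rw [this, neg_one_sq]
      rfl
    · intro hcon
      have : ((-1 : ℍ[ℝ]ˣ), (-1 : ℍ[ℝ]ˣ)) = 1 := congrArg Subtype.val hcon
      have h1 : (-1 : ℍ[ℝ]ˣ) = 1 := congrArg Prod.fst this
      have h2 : ((-1 : ℍ[ℝ]ˣ) : ℍ[ℝ]) = 1 := by rw [h1]; rfl
      rw [Units.val_neg, Units.val_one] at h2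
      have := congrArg QuaternionAlgebra.re h2
      norm_num at this
  have hquot : Nat.card (↥G ⧸ ψ.ker) = Nat.card ψ.range :=
    Nat.card_congr (QuotientGroup.quotientKerEquivRange ψ).toEquiv
  have hlag : Nat.card ↥G = Nat.card (↥G ⧸ ψ.ker) * Nat.card ψ.ker :=
    Subgroup.card_eq_card_quotient_mul_card_subgroup ψ.ker
  have hfinal : Nat.card ψ.range * 2 = 8 * a * b * 2 := by
    have h16 : Nat.card (↥G ⧸ ψ.ker) * Nat.card ψ.ker = 4 * a * (4 * b) := by
      rw [← hlag, hcardG]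
    rw [hkercard] at h16
    rw [← hquot, h16]
    ring
  have : Nat.card ψ.range = 8 * a * b := Nat.eq_of_mul_eq_mul_right (by norm_num) hfinal
  rw [← hmap, ← hrange, this]

end
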